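/- Let p be an odd prime and n ≥ 1. Let A be the cyclic group of order 2p^n with generator g, and let G = (A × A) ⋊ C₂ be the wreath product A ≀ C₂, where the nontrivial element of C₂ acts by swapping the two coordinates of A × A. Set a = ((g,1),1). If H is a maximal subgroup of G isomorphic to Dic_{p^n} × C_{p^n}, the direct product of the dicyclic group of order 4p^n with the cyclic group of order p^n, then H = ⟨a·y₀, a²⟩ for some involution y₀ of G lying outside the base subgroup A × A. -/

import Mathlib

open SemidirectProduct

/-- The homomorphism from `C₂ = Multiplicative (ZMod 2)` determined by an element `τ`
of a group satisfying `τ * τ = 1`. -/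
def homC2 {H : Type*} [Group H] (τ : H) (hτ : τ * τ = 1) : Multiplicative (ZMod 2) →* H where
  toFun s := if s.toAdd = 0 then 1 else τ
  map_one' := by simp
  map_mul' x y := by
    have h2 : ∀ z : ZMod 2, z = 0 ∨ z = 1 := by decide
    have h11 : (1 : ZMod 2) + 1 = 0 := by decide
    rcases h2 x.toAdd with hx | hx <;> rcases h2 y.toAdd with hy | hy <;>
      simp [toAdd_mul, hx, hy, h11, hτ]

/-- The coordinate-swapping automorphism of `A × A`. -/
def swapAut (A : Type*) [Group A] : MulAut (A × A) := (MulEquiv.prodComm : A × A ≃* A × A)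

theorem swapAut_sq (A : Type*) [Group A] : swapAut A * swapAut A = 1 := by
  ext p <;> simp [swapAut, MulAut.mul_apply]

/-- The action of `C₂` on `A × A` swapping the two coordinates. -/
def swapAction (A : Type*) [Group A] : Multiplicative (ZMod 2) →* MulAut (A × A) :=
  homC2 (swapAut A) (swapAut_sq A)

/-- The wreath product `A ≀ C₂ = (A × A) ⋊ C₂`, where the nontrivial element of `C₂`
acts by swapping the two coordinates of `A × A`. -/
abbrev WreathC2 (A : Type*) [Group A] := (A × A) ⋊[swapAction A] Multiplicative (ZMod 2)

-- swap action lemmas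
lemma swapAction_apply_sum {A : Type*} [CommGroup A] (ε : Multiplicative (ZMod 2)) (v : A × A) :
    ((swapAction A) ε v).1 * ((swapAction A) ε v).2 = v.1 * v.2 := by
  by_cases h : ε = 1 <;> simp [swapAction, homC2, h, swapAut, mul_comm, Prod.swap]

lemma swapAction_one_apply {A : Type*} [Group A] (v : A × A) :
    (swapAction A) 1 v = v := by
  rw [map_one]; rfl

lemma swapAction_ofAdd_one {A : Type*} [Group A] (v : A × A) :
    (swapAction A) (Multiplicative.ofAdd 1) v = (v.2, v.1) := by
  have : (Multiplicative.ofAdd (1 : ZMod 2)) ≠ 1 := by decide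
  simp [swapAction, homC2, this, swapAut, Prod.swap]

section Aux
variable (m : ℕ)

/-- parity invariant -/
def par (g : WreathC2 (Multiplicative (ZMod (2 * m)))) : ZMod 2 :=
  ZMod.castHom (dvd_mul_right 2 m) (ZMod 2) (g.left.1.toAdd + g.left.2.toAdd) + g.right.toAdd

lemma par_mul (g h : WreathC2 (Multiplicative (ZMod (2 * m)))) :
    par m (g * h) = par m g + par m h := by
  unfold par
  rw [SemidirectProduct.mul_left, SemidirectProduct.mul_right]
  have hs := swapAction_apply_sum (A := Multiplicative (ZMod (2 * m))) g.right h.left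
  have hs' : ((swapAction (Multiplicative (ZMod (2 * m)))) g.right h.left).1.toAdd
      + ((swapAction (Multiplicative (ZMod (2 * m)))) g.right h.left).2.toAdd
      = h.left.1.toAdd + h.left.2.toAdd := by
    have := congrArg Multiplicative.toAdd hs
    simpa using this
  simp only [Prod.fst_mul, Prod.snd_mul, toAdd_mul]
  rw [show g.left.1.toAdd + ((swapAction _) g.right h.left).1.toAdd +
      (g.left.2.toAdd + ((swapAction _) g.right h.left).2.toAdd)
      = (g.left.1.toAdd + g.left.2.toAdd) + (((swapAction _) g.right h.left).1.toAdd
        + ((swapAction _) g.right h.left).2.toAdd) by ring, hs']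
  rw [map_add]
  ring

def fhom : WreathC2 (Multiplicative (ZMod (2 * m))) →* Multiplicative (ZMod 2) where
  toFun g := Multiplicative.ofAdd (par m g)
  map_one' := by
    have : par m 1 = 0 := by simp [par]
    simp [this]
  map_mul' x y := by
    show Multiplicative.ofAdd (par m (x * y)) = _
    rw [par_mul, ofAdd_add]

lemma mem_ker_fhom (g : WreathC2 (Multiplicative (ZMod (2 * m)))) :
    g ∈ (fhom m).ker ↔ par m g = 0 := by
  rw [MonoidHom.mem_ker]
  constructor
  · intro h
    have := congrArg Multiplicative.toAdd h
    simpa [fhom] using this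
  · intro h
    simp [fhom, h]

end Aux

section Aux2
variable (m : ℕ)

lemma even_of_cast (hm : 0 < m) (z : ZMod (2 * m))
    (h : ZMod.castHom (dvd_mul_right 2 m) (ZMod 2) z = 0) : ∃ w, z = 2 * w := by
  haveI : NeZero (2 * m) := ⟨by omega⟩
  have h1 : ((z.val : ℕ) : ZMod 2) = 0 := by
    rwa [ZMod.natCast_val, ← ZMod.castHom_apply (h := dvd_mul_right 2 m)]
  rw [ZMod.natCast_eq_zero_iff] at h1
  obtain ⟨k, hk⟩ := h1
  refine ⟨(k : ZMod (2 * m)), ?_⟩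
  have : z = ((z.val : ℕ) : ZMod (2 * m)) := by rw [ZMod.natCast_val, ZMod.cast_id]
  rw [this, hk]
  push_cast
  ring

lemma cast_of_even (z : ZMod (2 * m)) (h : ∃ w, z = 2 * w) :
    ZMod.castHom (dvd_mul_right 2 m) (ZMod 2) z = 0 := by
  obtain ⟨w, rfl⟩ := h
  rw [map_mul]
  have : (ZMod.castHom (dvd_mul_right 2 m) (ZMod 2)) 2 = 0 := by
    have : ((2 : ℕ) : ZMod (2*m)) = 2 := by push_cast; ring
    rw [← this, map_natCast]
    decide
  rw [this, zero_mul]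

/-- any base element with even coordinate sum lies in a subgroup containing
`inl (g, g)` and `inl (1, g²)`. -/
lemma even_base_mem (hm : 0 < m) (S : Subgroup (WreathC2 (Multiplicative (ZMod (2 * m)))))
    (h1 : (⟨(Multiplicative.ofAdd 1, Multiplicative.ofAdd 1), 1⟩ :
        WreathC2 (Multiplicative (ZMod (2 * m)))) ∈ S)
    (h2 : (⟨(1, Multiplicative.ofAdd 2), 1⟩ :
        WreathC2 (Multiplicative (ZMod (2 * m)))) ∈ S)
    (x y : ZMod (2 * m)) (hxy : ∃ w, x + y = 2 * w) :
    (⟨(Multiplicative.ofAdd x, Multiplicative.ofAdd y), 1⟩ :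
        WreathC2 (Multiplicative (ZMod (2 * m)))) ∈ S := by
  haveI : NeZero (2 * m) := ⟨by omega⟩
  obtain ⟨w, hw⟩ := hxy
  -- y - x = 2 * (w - x)
  set w' := w - x with hw'
  have hyx : y = x + 2 * w' := by rw [hw']; ring_nf; linear_combination hw
  have key : (⟨(Multiplicative.ofAdd x, Multiplicative.ofAdd y), 1⟩ :
        WreathC2 (Multiplicative (ZMod (2 * m))))
      = (⟨(Multiplicative.ofAdd 1, Multiplicative.ofAdd 1), 1⟩ :
        WreathC2 (Multiplicative (ZMod (2 * m)))) ^ x.val *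
        (⟨(1, Multiplicative.ofAdd 2), 1⟩ :
        WreathC2 (Multiplicative (ZMod (2 * m)))) ^ w'.val := by
    have e1 : (⟨(Multiplicative.ofAdd 1, Multiplicative.ofAdd 1), 1⟩ :
        WreathC2 (Multiplicative (ZMod (2 * m))))
        = inl (Multiplicative.ofAdd 1, Multiplicative.ofAdd 1) := rfl
    have e2 : (⟨(1, Multiplicative.ofAdd 2), 1⟩ :
        WreathC2 (Multiplicative (ZMod (2 * m))))
        = inl (1, Multiplicative.ofAdd 2) := rfl
    rw [e1, e2, ← map_pow, ← map_pow, ← map_mul]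
    have : ((Multiplicative.ofAdd (1 : ZMod (2*m)), Multiplicative.ofAdd (1 : ZMod (2*m)))
          ^ x.val * (1, Multiplicative.ofAdd (2 : ZMod (2*m))) ^ w'.val :
          Multiplicative (ZMod (2*m)) × Multiplicative (ZMod (2*m)))
        = (Multiplicative.ofAdd x, Multiplicative.ofAdd y) := by
      ext
      · show (Multiplicative.ofAdd (1:ZMod (2*m))) ^ x.val * 1 ^ w'.val = Multiplicative.ofAdd x
        rw [one_pow, mul_one, ← ofAdd_nsmul]
        congr 1
        rw [nsmul_eq_mul, mul_one, ZMod.natCast_val, ZMod.cast_id]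
      · show (Multiplicative.ofAdd (1:ZMod (2*m))) ^ x.val *
            (Multiplicative.ofAdd (2:ZMod (2*m))) ^ w'.val = Multiplicative.ofAdd y
        rw [← ofAdd_nsmul, ← ofAdd_nsmul, ← ofAdd_add]
        congr 1
        rw [nsmul_eq_mul, nsmul_eq_mul, mul_one, ZMod.natCast_val, ZMod.cast_id,
          ZMod.natCast_val, ZMod.cast_id, hyx]
        ring
    rw [this]
    rfl
  rw [key]
  exact S.mul_mem (S.pow_mem h1 _) (S.pow_mem h2 _)

end Aux2

section Unique
variable (m : ℕ)

lemma invol_eq (hm : 0 < m) (hmo : Odd m)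
    (z : QuaternionGroup m × Multiplicative (ZMod m))
    (hz : z * z = 1) (hz1 : z ≠ 1) :
    z = (QuaternionGroup.a (m : ZMod (2 * m)), 1) := by
  haveI : NeZero (2 * m) := ⟨by omega⟩
  haveI : NeZero m := ⟨by omega⟩
  obtain ⟨q, c⟩ := z
  have hq : q * q = 1 := congrArg Prod.fst hz
  have hc : c * c = 1 := congrArg Prod.snd hz
  -- second component is trivial since m is odd
  have hc2 : c.toAdd + c.toAdd = 0 := by
    have := congrArg Multiplicative.toAdd hc
    simpa using this
  obtain ⟨k, hk⟩ := hmo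
  have hdvd : (m + 1) / 2 * 2 = m + 1 := by omega
  have hc0 : c.toAdd = 0 := by
    calc c.toAdd = (((m + 1) : ℕ) : ZMod m) * c.toAdd := by
          push_cast [ZMod.natCast_self]; ring
      _ = ((((m + 1) / 2 : ℕ)) : ZMod m) * (c.toAdd + c.toAdd) := by
          rw [show (((((m + 1) / 2 : ℕ))) : ZMod m) * (c.toAdd + c.toAdd)
            = ((((m + 1) / 2 * 2 : ℕ)) : ZMod m) * c.toAdd by push_cast; ring, hdvd]
      _ = 0 := by rw [hc2, mul_zero]
  have hc1 : c = 1 := by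
    have : c = Multiplicative.ofAdd c.toAdd := rfl
    rw [this, hc0]; rfl
  subst hc1
  -- first component
  rcases q with i | i
  · rw [QuaternionGroup.a_mul_a, QuaternionGroup.one_def] at hq
    have hii : i + i = 0 := by
      have := QuaternionGroup.a.inj hq
      exact this
    have hv : ((2 * i.val : ℕ) : ZMod (2 * m)) = 0 := by
      push_cast [ZMod.natCast_val, ZMod.cast_id]
      linear_combination hii
    rw [ZMod.natCast_eq_zero_iff] at hv
    obtain ⟨t, ht⟩ := hv
    have hlt : i.val < 2 * m := ZMod.val_lt i
    have hv2 : i.val = 0 ∨ i.val = m := by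
      rcases Nat.lt_or_ge t 2 with h | h
      · interval_cases t <;> omega
      · exfalso; nlinarith
    have hi : i = ((i.val : ℕ) : ZMod (2 * m)) := by
      rw [ZMod.natCast_val, ZMod.cast_id]
    rcases hv2 with h | h
    · exfalso; apply hz1
      rw [hi, h]
      norm_num [QuaternionGroup.one_def]
    · rw [hi, h]
  · exfalso
    rw [QuaternionGroup.xa_mul_xa, QuaternionGroup.one_def] at hq
    have := QuaternionGroup.a.inj hq
    have hm0 : ((m : ℕ) : ZMod (2 * m)) = 0 := by
      have h' : (m : ZMod (2 * m)) + i - i = (m : ZMod (2*m)) := by ring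
      rw [h'] at this; exact this
    rw [ZMod.natCast_eq_zero_iff] at hm0
    exact absurd (Nat.le_of_dvd hm hm0) (by omega)

end Unique

lemma ofAdd_one_sq_c2 : (Multiplicative.ofAdd (1 : ZMod 2)) ^ (2 : ℕ) = 1 := by decide

lemma ofAdd_one_ne_one_c2 : (Multiplicative.ofAdd (1 : ZMod 2)) ≠ 1 := by decide

section Main
variable (m : ℕ)

local notation "AA" => Multiplicative (ZMod (2 * m))
local notation "GG" => WreathC2 (Multiplicative (ZMod (2 * m)))

lemma main_aux (hm : 0 < m) (hmo : Odd m)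
    (H : Subgroup GG) (hH : IsCoatom H)
    (hiso : Nonempty (H ≃* QuaternionGroup m × Multiplicative (ZMod m))) :
    ∃ y₀ : GG, orderOf y₀ = 2 ∧ y₀ ∉ (inl : (AA × AA) →* GG).range ∧
      H = Subgroup.closure
        {inl ((Multiplicative.ofAdd 1 : AA), 1) * y₀,
         (inl ((Multiplicative.ofAdd 1 : AA), 1)) ^ 2} := by
  haveI : NeZero m := ⟨hm.ne'⟩
  haveI : NeZero (2 * m) := ⟨by omega⟩
  obtain ⟨e⟩ := hiso
  set a : GG := inl ((Multiplicative.ofAdd 1 : AA), 1) with ha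
  set y₀ : GG := inr (Multiplicative.ofAdd (1 : ZMod 2)) with hy₀
  -- cardinalities
  have cardA : Nat.card AA = 2 * m := by
    rw [Nat.card_congr (Multiplicative.toAdd (α := ZMod (2*m))), Nat.card_zmod]
  have cardG : Nat.card GG = 4 * (m * m) * 2 := by
    have eG : GG ≃ ((AA × AA) × Multiplicative (ZMod 2)) :=
      ⟨fun x => (x.left, x.right), fun z => ⟨z.1, z.2⟩, fun x => rfl, fun z => rfl⟩
    rw [Nat.card_congr eG, Nat.card_prod, Nat.card_prod, cardA,
      Nat.card_congr (Multiplicative.toAdd (α := ZMod 2)), Nat.card_zmod]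
    ring
  have cardH : Nat.card H = 4 * (m * m) := by
    rw [Nat.card_congr e.toEquiv, Nat.card_prod,
      Nat.card_eq_fintype_card (α := QuaternionGroup m), QuaternionGroup.card,
      Nat.card_congr (Multiplicative.toAdd (α := ZMod m)), Nat.card_zmod]
    ring
  have hidx : H.index = 2 := by
    have h1 := H.card_mul_index
    rw [cardH, cardG] at h1
    exact Nat.eq_of_mul_eq_mul_left (by positivity) h1
  have hsq : ∀ x : GG, x * x ∈ H := Subgroup.mul_self_mem_of_index_two hidx
  -- uniqueness of involutions in H
  have huniq : ∀ u v : GG, u ∈ H → v ∈ H → u * u = 1 → u ≠ 1 → v * v = 1 → v ≠ 1 →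
      u = v := by
    intro u v hu hv huu hu1 hvv hv1
    have key : ∀ (w : GG) (hw : w ∈ H), w * w = 1 → w ≠ 1 →
        e ⟨w, hw⟩ = (QuaternionGroup.a ((m : ℕ) : ZMod (2 * m)), 1) := by
      intro w hw hww hw1
      refine invol_eq m hm hmo _ ?_ ?_
      · rw [← map_mul, ← map_one e]
        congr 1
        exact Subtype.ext hww
      · intro hcon
        apply hw1
        have := e.injective (hcon.trans (map_one e).symm)
        exact congrArg Subtype.val this
    have h1 := key u hu huu hu1
    have h2 := key v hv hvv hv1
    have := e.injective (h1.trans h2.symm)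
    exact congrArg Subtype.val this
  -- generators of the even base subgroup are in H
  have hgen1 : (⟨(Multiplicative.ofAdd 1, Multiplicative.ofAdd 1), 1⟩ : GG) ∈ H := by
    have h := hsq ⟨(Multiplicative.ofAdd 1, 1), Multiplicative.ofAdd 1⟩
    have : (⟨(Multiplicative.ofAdd 1, 1), Multiplicative.ofAdd 1⟩ *
        ⟨(Multiplicative.ofAdd 1, 1), Multiplicative.ofAdd 1⟩ : GG)
        = ⟨(Multiplicative.ofAdd 1, Multiplicative.ofAdd 1), 1⟩ := by
      ext
      · show (Multiplicative.ofAdd (1 : ZMod (2*m)), (1 : AA)).1 *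
          ((swapAction AA) (Multiplicative.ofAdd 1) (Multiplicative.ofAdd 1, 1)).1 = _
        rw [swapAction_ofAdd_one]
        show Multiplicative.ofAdd (1 : ZMod (2*m)) * 1 = Multiplicative.ofAdd 1
        rw [mul_one]
      · show (Multiplicative.ofAdd (1 : ZMod (2*m)), (1 : AA)).2 *
          ((swapAction AA) (Multiplicative.ofAdd 1) (Multiplicative.ofAdd 1, 1)).2 = _
        rw [swapAction_ofAdd_one]
        show (1 : AA) * Multiplicative.ofAdd 1 = Multiplicative.ofAdd 1
        rw [one_mul]
      · show Multiplicative.ofAdd (1 : ZMod 2) * Multiplicative.ofAdd 1 = 1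
        decide
    rwa [this] at h
  have hgen2 : (⟨(1, Multiplicative.ofAdd 2), 1⟩ : GG) ∈ H := by
    have h := hsq (inl ((1 : AA), Multiplicative.ofAdd 1))
    have : (inl ((1 : AA), Multiplicative.ofAdd 1) * inl ((1 : AA), Multiplicative.ofAdd 1) : GG)
        = ⟨(1, Multiplicative.ofAdd 2), 1⟩ := by
      rw [← map_mul]
      have : ((1 : AA), Multiplicative.ofAdd (1 : ZMod (2*m))) *
          (1, Multiplicative.ofAdd 1) = (1, Multiplicative.ofAdd 2) := by
        ext
        · show (1 : AA) * 1 = 1; rw [mul_one]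
        · show Multiplicative.ofAdd (1 : ZMod (2*m)) * Multiplicative.ofAdd 1 =
            Multiplicative.ofAdd 2
          rw [← ofAdd_add]; norm_num
      rw [this]; rfl
    rwa [this] at h
  have hbase : ∀ x y : ZMod (2 * m), (∃ w, x + y = 2 * w) →
      (⟨(Multiplicative.ofAdd x, Multiplicative.ofAdd y), 1⟩ : GG) ∈ H :=
    fun x y hxy => even_base_mem m hm H hgen1 hgen2 x y hxy
  -- the central involution w₁ = inl (g^m, g^m)
  have hmne : ((m : ℕ) : ZMod (2 * m)) ≠ 0 := by
    rw [Ne, ZMod.natCast_eq_zero_iff]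
    intro hd
    exact absurd (Nat.le_of_dvd hm hd) (by omega)
  have hmm0 : ((m : ℕ) : ZMod (2 * m)) + ((m : ℕ) : ZMod (2 * m)) = 0 := by
    have : ((m : ℕ) : ZMod (2 * m)) + ((m : ℕ) : ZMod (2 * m)) = ((2 * m : ℕ) : ZMod (2 * m)) := by
      push_cast; ring
    rw [this, ZMod.natCast_self]
  set w₁ : GG := inl (Multiplicative.ofAdd ((m : ℕ) : ZMod (2 * m)),
    Multiplicative.ofAdd ((m : ℕ) : ZMod (2 * m))) with hw₁
  have hw₁H : w₁ ∈ H := hbase _ _ ⟨((m : ℕ) : ZMod (2 * m)), by push_cast; ring⟩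
  have hw₁sq : w₁ * w₁ = 1 := by
    rw [hw₁, ← map_mul]
    have : (Multiplicative.ofAdd ((m : ℕ) : ZMod (2 * m)),
        Multiplicative.ofAdd ((m : ℕ) : ZMod (2 * m))) *
        (Multiplicative.ofAdd ((m : ℕ) : ZMod (2 * m)),
        Multiplicative.ofAdd ((m : ℕ) : ZMod (2 * m)))
        = ((1 : AA), (1 : AA)) := by
      ext <;>
      · show Multiplicative.ofAdd ((m : ℕ) : ZMod (2*m)) * Multiplicative.ofAdd _ = 1
        rw [← ofAdd_add, hmm0]; rfl
    rw [this]; rfl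
  have hw₁ne : w₁ ≠ 1 := by
    intro hcon
    apply hmne
    have := congrArg (fun z : GG => (z.left.1).toAdd) hcon
    simpa [hw₁] using this
  -- H is contained in the kernel of the parity homomorphism
  have hHker : ∀ h ∈ H, par m h = 0 := by
    intro h hh
    have hrepr : h = ⟨(Multiplicative.ofAdd h.left.1.toAdd, Multiplicative.ofAdd h.left.2.toAdd),
        h.right⟩ := rfl
    have hpar : par m h = ZMod.castHom (dvd_mul_right 2 m) (ZMod 2)
        (h.left.1.toAdd + h.left.2.toAdd) + h.right.toAdd := rfl
    have h2 : ∀ z : ZMod 2, z = 0 ∨ z = 1 := by decide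
    have h2' : ∀ t : Multiplicative (ZMod 2), t = 1 ∨ t = Multiplicative.ofAdd 1 := by decide
    set x := h.left.1.toAdd with hx
    set y := h.left.2.toAdd with hyy
    rcases h2 (ZMod.castHom (dvd_mul_right 2 m) (ZMod 2) (x + y)) with hc | hc <;>
      rcases h2' h.right with hε | hε
    · rw [hpar, hc, hε]; simp
    · -- case B : parity 0, ε = 1 : r₀ = inr 1 would be a second involution
      exfalso
      have hbmem : (⟨(Multiplicative.ofAdd x, Multiplicative.ofAdd y), 1⟩ : GG) ∈ H :=
        hbase x y (even_of_cast m hm _ hc)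
      have hdecomp : h = (⟨(Multiplicative.ofAdd x, Multiplicative.ofAdd y), 1⟩ : GG) * y₀ := by
        rw [hrepr, hε, hy₀]
        ext
        · show Multiplicative.ofAdd x = Multiplicative.ofAdd x *
            ((swapAction AA) 1 ((1 : AA), (1 : AA))).1
          rw [swapAction_one_apply]
          show Multiplicative.ofAdd x = Multiplicative.ofAdd x * 1
          rw [mul_one]
        · show Multiplicative.ofAdd y = Multiplicative.ofAdd y *
            ((swapAction AA) 1 ((1 : AA), (1 : AA))).2
          rw [swapAction_one_apply]
          show Multiplicative.ofAdd y = Multiplicative.ofAdd y * 1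
          rw [mul_one]
        · show Multiplicative.ofAdd (1 : ZMod 2) = 1 * Multiplicative.ofAdd 1
          rw [one_mul]
      have hy₀H : y₀ ∈ H := by
        have h' := H.mul_mem (H.inv_mem hbmem) hh
        rw [hdecomp, inv_mul_cancel_left] at h'
        exact h'
      have hy₀sq : y₀ * y₀ = 1 := by
        rw [hy₀, ← map_mul]
        have : Multiplicative.ofAdd (1 : ZMod 2) * Multiplicative.ofAdd 1 = 1 := by decide
        rw [this, map_one]
      have hy₀ne : y₀ ≠ 1 := by
        intro hcon
        have h' : y₀.right = (1 : GG).right := congrArg SemidirectProduct.right hcon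
        rw [hy₀] at h'
        have h'' : (Multiplicative.ofAdd (1 : ZMod 2)) = 1 := by simpa using h'
        exact absurd h'' (by decide)
      have heq := huniq w₁ y₀ hw₁H hy₀H hw₁sq hw₁ne hy₀sq hy₀ne
      have hr : w₁.right = y₀.right := congrArg SemidirectProduct.right heq
      rw [hw₁, hy₀] at hr
      have hr' : (1 : Multiplicative (ZMod 2)) = Multiplicative.ofAdd 1 := by simpa using hr
      exact absurd hr' (by decide)
    · -- case A : parity 1, ε = 0 : a would be in H, giving a second involution a^m
      exfalso
      have hbmem : (⟨(Multiplicative.ofAdd (x - 1), Multiplicative.ofAdd y), 1⟩ : GG) ∈ H := by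
        refine hbase _ _ (even_of_cast m hm _ ?_)
        have hrw : (x - 1) + y = (x + y) - 1 := by ring
        rw [hrw, map_sub, hc, map_one, sub_self]
      have hdecomp : h = a * (⟨(Multiplicative.ofAdd (x - 1), Multiplicative.ofAdd y), 1⟩ : GG) := by
        rw [hrepr, hε, ha]
        ext
        · show Multiplicative.ofAdd x = Multiplicative.ofAdd (1 : ZMod (2*m)) *
            ((swapAction AA) 1 (Multiplicative.ofAdd (x-1), Multiplicative.ofAdd y)).1
          rw [swapAction_one_apply]
          show Multiplicative.ofAdd x = Multiplicative.ofAdd (1 : ZMod (2*m)) *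
            Multiplicative.ofAdd (x - 1)
          rw [← ofAdd_add]
          congr 1
          ring
        · show Multiplicative.ofAdd y = (1 : AA) *
            ((swapAction AA) 1 (Multiplicative.ofAdd (x-1), Multiplicative.ofAdd y)).2
          rw [swapAction_one_apply]
          show Multiplicative.ofAdd y = 1 * Multiplicative.ofAdd y
          rw [one_mul]
        · show (1 : Multiplicative (ZMod 2)) = 1 * 1
          rw [one_mul]
      have haH : a ∈ H := by
        have h' := H.mul_mem hh (H.inv_mem hbmem)
        rw [hdecomp, mul_inv_cancel_right] at h'
        exact h'
      have hamH : a ^ m ∈ H := H.pow_mem haH m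
      have ham : a ^ m = inl (Multiplicative.ofAdd ((m : ℕ) : ZMod (2 * m)), 1) := by
        rw [ha, ← map_pow]
        congr 1
        have : ((Multiplicative.ofAdd (1 : ZMod (2*m)), (1 : AA)) ^ m :  AA × AA)
            = (Multiplicative.ofAdd (1 : ZMod (2*m)) ^ m, 1 ^ m) := rfl
        rw [this, one_pow, ← ofAdd_nsmul]
        congr 2
        rw [nsmul_eq_mul, mul_one]
      have hamsq : a ^ m * a ^ m = 1 := by
        rw [ham, ← map_mul]
        have : (Multiplicative.ofAdd ((m : ℕ) : ZMod (2 * m)), (1 : AA)) *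
            (Multiplicative.ofAdd ((m : ℕ) : ZMod (2 * m)), 1) = ((1 : AA), (1 : AA)) := by
          ext
          · show Multiplicative.ofAdd ((m : ℕ) : ZMod (2*m)) * Multiplicative.ofAdd _ = 1
            rw [← ofAdd_add, hmm0]; rfl
          · show (1 : AA) * 1 = 1; rw [mul_one]
        rw [this]; rfl
      have hamne : a ^ m ≠ 1 := by
        intro hcon
        apply hmne
        rw [ham] at hcon
        have := congrArg (fun z : GG => (z.left.1).toAdd) hcon
        simpa using this
      have := huniq w₁ (a ^ m) hw₁H hamH hw₁sq hw₁ne hamsq hamne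
      rw [ham] at this
      apply hmne
      have := congrArg (fun z : GG => (z.left.2).toAdd) this
      simpa [hw₁] using this
    · -- parity 1, ε = ofAdd 1 : kernel condition satisfied
      rw [hpar, hc, hε]
      decide
  -- H equals the kernel of the parity homomorphism
  have hle : H ≤ (fhom m).ker := fun h hh => (mem_ker_fhom m h).2 (hHker h hh)
  have hker_ne_top : (fhom m).ker ≠ ⊤ := by
    intro htop
    have hmem : a ∈ (fhom m).ker := htop ▸ Subgroup.mem_top a
    rw [mem_ker_fhom] at hmem
    have hpa : par m a = ZMod.castHom (dvd_mul_right 2 m) (ZMod 2)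
        ((1 : ZMod (2*m)) + Multiplicative.toAdd (1 : AA)) +
        Multiplicative.toAdd (1 : Multiplicative (ZMod 2)) := rfl
    rw [hpa] at hmem
    simp only [toAdd_one, add_zero, map_one] at hmem
    exact absurd hmem (by decide)
  have hHK : H = (fhom m).ker := by
    rcases lt_or_eq_of_le hle with hlt | heq
    · exact absurd (hH.2 _ hlt) hker_ne_top
    · exact heq
  -- final statement
  refine ⟨y₀, ?_, ?_, ?_⟩
  · haveI : Fact (Nat.Prime 2) := ⟨Nat.prime_two⟩
    have hpow : y₀ ^ (2 : ℕ) = 1 := by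
      rw [hy₀, ← map_pow, ofAdd_one_sq_c2, map_one]
    have hne : y₀ ≠ 1 := by
      intro hcon
      have h' : y₀.right = (1 : GG).right := congrArg SemidirectProduct.right hcon
      rw [hy₀] at h'
      have h'' : (Multiplicative.ofAdd (1 : ZMod 2)) = 1 := by simpa using h'
      exact absurd h'' ofAdd_one_ne_one_c2
    exact orderOf_eq_prime hpow hne
  · rintro ⟨v, hv⟩
    have h' : (inl v : GG).right = y₀.right := congrArg SemidirectProduct.right hv
    rw [hy₀] at h'
    have h'' : (1 : Multiplicative (ZMod 2)) = Multiplicative.ofAdd 1 := by simpa using h'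
    exact absurd h'' (by decide)
  · rw [hHK]
    set b : GG := a * y₀ with hb
    have hbval : b = (⟨(Multiplicative.ofAdd 1, 1), Multiplicative.ofAdd 1⟩ : GG) := by
      rw [hb, ha, hy₀]
      ext
      · show Multiplicative.ofAdd (1 : ZMod (2*m)) *
          ((swapAction AA) 1 ((1:AA), (1:AA))).1 = Multiplicative.ofAdd 1
        rw [swapAction_one_apply]
        show Multiplicative.ofAdd (1 : ZMod (2*m)) * 1 = Multiplicative.ofAdd 1
        rw [mul_one]
      · show (1 : AA) * ((swapAction AA) 1 ((1:AA), (1:AA))).2 = 1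
        rw [swapAction_one_apply]
        show (1 : AA) * 1 = 1
        rw [mul_one]
      · show (1 : Multiplicative (ZMod 2)) * Multiplicative.ofAdd 1 = Multiplicative.ofAdd 1
        rw [one_mul]
    have ha2 : a ^ 2 = inl (Multiplicative.ofAdd (2 : ZMod (2*m)), 1) := by
      rw [ha, ← map_pow]
      congr 1
      have : ((Multiplicative.ofAdd (1 : ZMod (2*m)), (1 : AA)) ^ 2 : AA × AA)
          = (Multiplicative.ofAdd (1 : ZMod (2*m)) ^ 2, 1 ^ 2) := rfl
      rw [this, one_pow]
      have : Multiplicative.ofAdd (1 : ZMod (2*m)) ^ 2 = Multiplicative.ofAdd (2 : ZMod (2*m)) := by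
        rw [pow_two, ← ofAdd_add]
        norm_num
      rw [this]
    apply le_antisymm
    · -- ker ≤ closure
      intro z hz
      rw [mem_ker_fhom] at hz
      set C := Subgroup.closure ({b, a ^ 2} : Set GG) with hC
      have hbC : b ∈ C := Subgroup.subset_closure (Set.mem_insert _ _)
      have ha2C : a ^ 2 ∈ C := Subgroup.subset_closure (Set.mem_insert_of_mem _ rfl)
      have hgen1C : (⟨(Multiplicative.ofAdd 1, Multiplicative.ofAdd 1), 1⟩ : GG) ∈ C := by
        have hmul := C.mul_mem hbC hbC
        have : b * b = (⟨(Multiplicative.ofAdd 1, Multiplicative.ofAdd 1), 1⟩ : GG) := by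
          rw [hbval]
          ext
          · show Multiplicative.ofAdd (1 : ZMod (2*m)) *
              ((swapAction AA) (Multiplicative.ofAdd 1) (Multiplicative.ofAdd 1, 1)).1 = _
            rw [swapAction_ofAdd_one]
            show Multiplicative.ofAdd (1 : ZMod (2*m)) * 1 = Multiplicative.ofAdd 1
            rw [mul_one]
          · show (1 : AA) *
              ((swapAction AA) (Multiplicative.ofAdd 1) (Multiplicative.ofAdd 1, 1)).2 = _
            rw [swapAction_ofAdd_one]
            show (1 : AA) * Multiplicative.ofAdd 1 = Multiplicative.ofAdd 1
            rw [one_mul]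
          · show Multiplicative.ofAdd (1 : ZMod 2) * Multiplicative.ofAdd 1 = 1
            decide
        rwa [this] at hmul
      have hgen2C : (⟨(1, Multiplicative.ofAdd 2), 1⟩ : GG) ∈ C := by
        have hmul := C.mul_mem (C.mul_mem (C.inv_mem ha2C) hgen1C) hgen1C
        have hinv : (a ^ 2)⁻¹ = inl ((Multiplicative.ofAdd (2 : ZMod (2*m)))⁻¹, 1) := by
          rw [ha2, ← map_inv]
          congr 1
          ext
          · rfl
          · show ((1 : AA))⁻¹ = 1
            exact inv_one
        have : (a ^ 2)⁻¹ * (⟨(Multiplicative.ofAdd 1, Multiplicative.ofAdd 1), 1⟩ : GG) *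
            (⟨(Multiplicative.ofAdd 1, Multiplicative.ofAdd 1), 1⟩ : GG)
            = (⟨(1, Multiplicative.ofAdd 2), 1⟩ : GG) := by
          rw [hinv]
          have e1 : (inl ((Multiplicative.ofAdd (2 : ZMod (2*m)))⁻¹, (1:AA)) : GG) *
              (⟨(Multiplicative.ofAdd 1, Multiplicative.ofAdd 1), 1⟩ : GG)
              = inl ((Multiplicative.ofAdd (2 : ZMod (2*m)))⁻¹ * Multiplicative.ofAdd 1,
                  Multiplicative.ofAdd 1) := by
            rw [show (⟨(Multiplicative.ofAdd 1, Multiplicative.ofAdd 1), 1⟩ : GG)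
              = inl (Multiplicative.ofAdd 1, Multiplicative.ofAdd 1) from rfl, ← map_mul]
            congr 1
            ext
            · rfl
            · show (1:AA) * Multiplicative.ofAdd 1 = Multiplicative.ofAdd 1
              rw [one_mul]
          rw [e1, show (⟨(Multiplicative.ofAdd 1, Multiplicative.ofAdd 1), 1⟩ : GG)
              = inl (Multiplicative.ofAdd 1, Multiplicative.ofAdd 1) from rfl, ← map_mul]
          rw [show (⟨((1:AA), Multiplicative.ofAdd 2), 1⟩ : GG)
              = inl ((1:AA), Multiplicative.ofAdd 2) from rfl]
          congr 1
          ext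
          · show (Multiplicative.ofAdd (2 : ZMod (2*m)))⁻¹ * Multiplicative.ofAdd 1 *
              Multiplicative.ofAdd 1 = 1
            rw [← ofAdd_neg, ← ofAdd_add, ← ofAdd_add]
            norm_num
          · show Multiplicative.ofAdd (1 : ZMod (2*m)) * Multiplicative.ofAdd 1 =
              Multiplicative.ofAdd 2
            rw [← ofAdd_add]
            norm_num
        rwa [this] at hmul
      have hbaseC := even_base_mem m hm C hgen1C hgen2C
      -- decompose z
      have hrepr : z = ⟨(Multiplicative.ofAdd z.left.1.toAdd, Multiplicative.ofAdd z.left.2.toAdd),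
          z.right⟩ := rfl
      have hpar : par m z = ZMod.castHom (dvd_mul_right 2 m) (ZMod 2)
          (z.left.1.toAdd + z.left.2.toAdd) + z.right.toAdd := rfl
      have h2 : ∀ z : ZMod 2, z = 0 ∨ z = 1 := by decide
      have h2' : ∀ t : Multiplicative (ZMod 2), t = 1 ∨ t = Multiplicative.ofAdd 1 := by decide
      set x := z.left.1.toAdd with hx
      set y := z.left.2.toAdd with hyy
      rcases h2' z.right with hε | hε
      · -- z in base, even sum
        have hc : ZMod.castHom (dvd_mul_right 2 m) (ZMod 2) (x + y) = 0 := by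
          rw [hpar, hε] at hz
          simpa using hz
        have : z = (⟨(Multiplicative.ofAdd x, Multiplicative.ofAdd y), 1⟩ : GG) := by
          rw [hrepr, hε]
        rw [this]
        exact hbaseC x y (even_of_cast m hm _ hc)
      · -- z = b * base element with even sum
        have hc : ZMod.castHom (dvd_mul_right 2 m) (ZMod 2) (x + y) = 1 := by
          rw [hpar, hε] at hz
          rcases h2 (ZMod.castHom (dvd_mul_right 2 m) (ZMod 2) (x + y)) with hc0 | hc0
          · exfalso
            rw [hc0] at hz
            have hfalse : (1 : ZMod 2) = 0 := by simpa using hz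
            exact absurd hfalse (by decide)
          · exact hc0
        have heven : ZMod.castHom (dvd_mul_right 2 m) (ZMod 2) (y + (x - 1)) = 0 := by
          have hrw : y + (x - 1) = (x + y) - 1 := by ring
          rw [hrw, map_sub, hc, map_one, sub_self]
        have hdecomp : z = b *
            (⟨(Multiplicative.ofAdd y, Multiplicative.ofAdd (x - 1)), 1⟩ : GG) := by
          rw [hrepr, hε, hbval]
          ext
          · show Multiplicative.ofAdd x = Multiplicative.ofAdd (1 : ZMod (2*m)) *
              ((swapAction AA) (Multiplicative.ofAdd 1)
                (Multiplicative.ofAdd y, Multiplicative.ofAdd (x-1))).1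
            rw [swapAction_ofAdd_one]
            show Multiplicative.ofAdd x = Multiplicative.ofAdd (1 : ZMod (2*m)) *
              Multiplicative.ofAdd (x - 1)
            rw [← ofAdd_add]
            congr 1
            ring
          · show Multiplicative.ofAdd y = (1 : AA) *
              ((swapAction AA) (Multiplicative.ofAdd 1)
                (Multiplicative.ofAdd y, Multiplicative.ofAdd (x-1))).2
            rw [swapAction_ofAdd_one]
            show Multiplicative.ofAdd y = 1 * Multiplicative.ofAdd y
            rw [one_mul]
          · show Multiplicative.ofAdd (1 : ZMod 2) = Multiplicative.ofAdd 1 * 1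
            rw [mul_one]
        rw [hdecomp]
        exact C.mul_mem hbC (hbaseC y (x - 1) (even_of_cast m hm _ heven))
    · -- closure ≤ ker
      rw [Subgroup.closure_le]
      rintro z hz
      rcases hz with rfl | hz
      · show b ∈ (fhom m).ker
        rw [mem_ker_fhom]
        have hpb : par m b = ZMod.castHom (dvd_mul_right 2 m) (ZMod 2)
            ((1 : ZMod (2*m)) + Multiplicative.toAdd (1 : AA)) +
            Multiplicative.toAdd (Multiplicative.ofAdd (1 : ZMod 2)) := by
          rw [hbval]
          rfl
        rw [hpb]
        simp only [toAdd_one, add_zero, map_one, toAdd_ofAdd]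
        decide
      · rcases hz with rfl | h
        show a ^ 2 ∈ (fhom m).ker
        rw [mem_ker_fhom]
        have hpa2 : par m (a ^ 2) = ZMod.castHom (dvd_mul_right 2 m) (ZMod 2)
            ((2 : ZMod (2*m)) + Multiplicative.toAdd (1 : AA)) +
            Multiplicative.toAdd (1 : Multiplicative (ZMod 2)) := by
          rw [ha2]
          rfl
        rw [hpa2]
        simp only [toAdd_one, add_zero]
        exact cast_of_even m _ ⟨1, by norm_num⟩

end Main

/-- Let `p` be an odd prime, `G = A ≀ C₂` with `A` cyclic of order `2 p ^ n` with
generator `g`, and `a = ((g,1),1)`.  If `H` is a maximal subgroup of `G` isomorphic to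
`Dic_{p^n} × C_{p^n}`, then `H = ⟨a y₀, a²⟩` for some involution `y₀` of `G` outside
the base subgroup `A × A`. -/
theorem maximal_dicyclic_subgroup_of_wreath (p n : ℕ) (hp : p.Prime) (hodd : Odd p)
    (hn : 1 ≤ n)
    (H : Subgroup (WreathC2 (Multiplicative (ZMod (2 * p ^ n))))) (hH : IsCoatom H)
    (hiso : Nonempty (H ≃* QuaternionGroup (p ^ n) × Multiplicative (ZMod (p ^ n)))) :
    letI A := Multiplicative (ZMod (2 * p ^ n))
    letI G := WreathC2 A
    let g : A := Multiplicative.ofAdd 1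
    let a : G := inl (g, 1)
    ∃ y₀ : G, orderOf y₀ = 2 ∧ y₀ ∉ (inl : (A × A) →* G).range ∧
      H = Subgroup.closure {a * y₀, a ^ 2} := by
  show ∃ y₀ : WreathC2 (Multiplicative (ZMod (2 * p ^ n))), orderOf y₀ = 2 ∧
      y₀ ∉ (inl : (_ × _) →* _).range ∧
      H = Subgroup.closure
        {inl ((Multiplicative.ofAdd 1 : Multiplicative (ZMod (2 * p ^ n))), 1) * y₀,
         (inl ((Multiplicative.ofAdd 1 : Multiplicative (ZMod (2 * p ^ n))), 1)) ^ 2}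
  exact main_aux (p ^ n) (pow_pos hp.pos n) (hodd.pow) H hH hiso
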